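/- Let α = {x, y_1, …, y_{n−1}} be a finite poset with a distinguished element x, and for i ∈ {1,…,n} let N_i be the number of order-preserving bijections σ : α → {1,…,n} with σ(x) = i. Then N_i = 0 if and only if |{y ∈ α : y < x}| > i − 1 or |{y ∈ α : y > x}| > n − i. -/

import Mathlib

/-- `σ` is a linear extension of the finite poset `α`: an order-preserving bijection
onto `{0,…,n−1}` (ranks taken `1`-indexed elsewhere). -/
def IsLinExt {α : Type*} [Fintype α] [PartialOrder α]
    (σ : α ≃ Fin (Fintype.card α)) : Prop :=
  ∀ y z : α, y < z → σ y < σ z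

/-- `NExt α x i` is the number of linear extensions `σ` of `α` in which the
distinguished element `x` has (1-indexed) rank `i`. -/
noncomputable def NExt (α : Type*) [Fintype α] [PartialOrder α] (x : α) (i : ℕ) : ℕ :=
  Nat.card {σ : α ≃ Fin (Fintype.card α) // IsLinExt σ ∧ (σ x : ℕ) + 1 = i}

open Classical in
private lemma exists_downset {α : Type*} [Fintype α] [PartialOrder α] (x : α) :
    ∀ k : ℕ, (Finset.univ.filter (· < x)).card ≤ k →
      k + (Finset.univ.filter (x < ·)).card < Fintype.card α →
      ∃ D : Finset α, D.card = k ∧ x ∉ D ∧ (∀ y ∈ D, ∀ z, z ≤ y → z ∈ D) ∧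
        ∀ y, y < x → y ∈ D := by
  intro k
  induction k with
  | zero =>
    intro hB _
    refine ⟨∅, rfl, by simp, by simp, fun y hy => ?_⟩
    have : y ∈ Finset.univ.filter (· < x) := by simpa using hy
    simp [Finset.card_eq_zero.mp (Nat.le_zero.mp hB)] at this
  | succ k ih =>
    intro hB hn
    rcases eq_or_lt_of_le hB with heq | hlt
    · refine ⟨Finset.univ.filter (· < x), heq, by simp, ?_, by simp⟩
      intro y hy z hz
      simp only [Finset.mem_filter, Finset.mem_univ, true_and] at hy ⊢
      exact lt_of_le_of_lt hz hy
    · obtain ⟨D, hcard, hxD, hdown, hbelow⟩ := ih (Nat.lt_succ_iff.mp hlt) (by omega)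
      set E := Dᶜ \ insert x (Finset.univ.filter (x < ·)) with hE
      have hEne : E.Nonempty := by
        by_contra hne
        rw [Finset.not_nonempty_iff_eq_empty, hE, Finset.sdiff_eq_empty_iff_subset] at hne
        have hsub : (Finset.univ : Finset α) ⊆ D ∪ insert x (Finset.univ.filter (x < ·)) := by
          intro y _
          by_cases hy : y ∈ D
          · exact Finset.mem_union_left _ hy
          · exact Finset.mem_union_right _ (hne (Finset.mem_compl.mpr hy))
        have h4 := Finset.card_le_card hsub
        have h5 := Finset.card_union_le D (insert x (Finset.univ.filter (x < ·)))
        have h2 := Finset.card_insert_le x (Finset.univ.filter (x < ·))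
        rw [Finset.card_univ] at h4
        omega
      obtain ⟨m, hmE, hmin'⟩ := Finset.exists_minimal hEne
      have hmin : ∀ z ∈ E, ¬ z < m := fun z hz hzm => hzm.not_ge (hmin' hz hzm.le)
      have hmD : m ∉ D := by
        have := (Finset.mem_sdiff.mp hmE).1; simpa using this
      have hmx : m ≠ x := by
        have := (Finset.mem_sdiff.mp hmE).2; simp at this; tauto
      have hxm : ¬ x < m := by
        have := (Finset.mem_sdiff.mp hmE).2; simp at this; tauto
      refine ⟨insert m D, ?_, ?_, ?_, fun y hy => Finset.mem_insert_of_mem (hbelow y hy)⟩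
      · rw [Finset.card_insert_of_notMem hmD, hcard]
      · simp only [Finset.mem_insert]
        push_neg
        exact ⟨fun h => hmx h.symm, hxD⟩
      · intro y hy z hz
        rcases Finset.mem_insert.mp hy with rfl | hyD
        · rcases eq_or_lt_of_le hz with rfl | hzm
          · exact Finset.mem_insert_self _ _
          · refine Finset.mem_insert_of_mem ?_
            by_contra hzD
            have hzE : z ∈ E := by
              rw [hE, Finset.mem_sdiff]
              constructor
              · simpa using hzD
              · simp only [Finset.mem_insert, Finset.mem_filter, Finset.mem_univ, true_and]
                push_neg
                constructor
                · rintro rfl; exact hxm hzm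
                · intro hxz; exact hxm (hxz.trans hzm)
            exact hmin z hzE hzm
        · exact Finset.mem_insert_of_mem (hdown y hyD z hz)

private lemma card_fin_lt {n : ℕ} (k : Fin n) : Nat.card {j : Fin n // j < k} = (k : ℕ) :=
  calc Nat.card {j : Fin n // j < k} = Nat.card (Set.Iio k) :=
        Nat.card_congr (Equiv.subtypeEquivRight fun _ => Iff.rfl)
    _ = (k : ℕ) := by rw [Nat.card_eq_fintype_card, ← Set.toFinset_card, Set.toFinset_Iio, Fin.card_Iio]

private lemma card_fin_gt {n : ℕ} (k : Fin n) :
    Nat.card {j : Fin n // k < j} = n - 1 - (k : ℕ) :=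
  calc Nat.card {j : Fin n // k < j} = Nat.card (Set.Ioi k) :=
        Nat.card_congr (Equiv.subtypeEquivRight fun _ => Iff.rfl)
    _ = n - 1 - (k : ℕ) := by rw [Nat.card_eq_fintype_card, ← Set.toFinset_card, Set.toFinset_Ioi, Fin.card_Ioi]

open Classical in
private lemma exists_linext {α : Type*} [Fintype α] [PartialOrder α] (x : α) (i : ℕ)
    (h1 : 1 ≤ i) (h2 : i ≤ Fintype.card α)
    (hB : (Finset.univ.filter (· < x)).card ≤ i - 1)
    (hA : (Finset.univ.filter (x < ·)).card ≤ Fintype.card α - i) :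
    ∃ σ : α ≃ Fin (Fintype.card α), IsLinExt σ ∧ (σ x : ℕ) + 1 = i := by
  obtain ⟨D, hcard, hxD, hdown, hbelow⟩ := exists_downset x (i-1) hB (by omega)
  set r : α → ℕ := fun y => if y ∈ D then 0 else if y = x then 1 else 2 with hr
  have htleinj : Function.Injective (toLinearExtension : α →o LinearExtension α) := by
    intro a b hab
    exact hab
  set f : α → ℕ ×ₗ LinearExtension α := fun y => toLex (r y, toLinearExtension y) with hf
  have hinj : Function.Injective f := by
    intro a b hab
    have h2 : (ofLex (f a)).2 = (ofLex (f b)).2 := by rw [hab]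
    exact htleinj h2
  have hrx : r x = 1 := by simp [hr, hxD]
  have hrD : ∀ y, y ∈ D ↔ r y = 0 := by
    intro y
    constructor
    · intro hy; simp [hr, hy]
    · intro hy
      by_contra hc
      simp only [hr] at hy
      rw [if_neg hc] at hy
      split_ifs at hy <;> omega
  have key : ∀ y z : α, y < z → f y < f z := by
    intro y z hyz
    have htle : toLinearExtension y < toLinearExtension z :=
      lt_of_le_of_ne (toLinearExtension.monotone hyz.le)
        (fun h => absurd (htleinj h) hyz.ne)
    have hrle : r y ≤ r z := by
      by_cases hz : z ∈ D
      · have hy : y ∈ D := hdown z hz y hyz.le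
        simp [hr, hy]
      · by_cases hzx : z = x
        · have hy : y ∈ D := hbelow y (hzx ▸ hyz)
          simp [hr, hy]
        · have h2 : r z = 2 := by simp [hr, hz, hzx]
          have h3 : r y ≤ 2 := by
            simp only [hr]
            split_ifs <;> omega
          omega
    rw [hf]
    rw [Prod.Lex.lt_iff]
    rcases lt_or_eq_of_le hrle with h | h
    · exact Or.inl h
    · exact Or.inr ⟨h, htle⟩
  have hcardr : Fintype.card (Set.range f) = Fintype.card α :=
    Set.card_range_of_injective hinj
  let e := monoEquivOfFin (Set.range f) hcardr
  let σ : α ≃ Fin (Fintype.card α) := (Equiv.ofInjective f hinj).trans e.symm.toEquiv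
  have happ : ∀ y, σ y = e.symm ⟨f y, Set.mem_range_self y⟩ := by
    intro y
    simp [σ, Equiv.ofInjective_apply]
  have hmono : ∀ y z : α, f y < f z ↔ σ y < σ z := by
    intro y z
    rw [happ y, happ z, OrderIso.lt_iff_lt, Subtype.mk_lt_mk]
  have hlin : IsLinExt σ := fun y z h => (hmono y z).mp (key y z h)
  have hfx : ∀ y, f y < f x ↔ y ∈ D := by
    intro y
    constructor
    · intro h
      rw [hf, Prod.Lex.lt_iff] at h
      dsimp only [ofLex_toLex] at h
      rcases h with h | ⟨h, h2⟩
      · rw [hrx] at h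
        exact (hrD y).mpr (by omega)
      · exfalso
        rw [hrx] at h
        have hyx : y = x := by
          by_contra hc
          have hyD : y ∉ D := fun hy => by rw [(hrD y).mp hy] at h; omega
          have : r y = 2 := by simp [hr, hyD, hc]
          omega
        rw [hyx] at h2
        exact lt_irrefl _ h2
    · intro h
      have h0 : r y = 0 := (hrD y).mp h
      rw [hf, Prod.Lex.lt_iff]
      exact Or.inl (by show r y < r x; omega)
  have hrank : (σ x : ℕ) = i - 1 := by
    have e1 : Nat.card {y : α // σ y < σ x} = Nat.card {j : Fin (Fintype.card α) // j < σ x} :=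
      Nat.card_congr (Equiv.subtypeEquiv σ (fun y => Iff.rfl))
    have e2 : Nat.card {y : α // σ y < σ x} = Nat.card {y : α // y ∈ D} :=
      Nat.card_congr (Equiv.subtypeEquivRight (fun y => by rw [← hmono, hfx]))
    have e3 : Nat.card {y : α // y ∈ D} = i - 1 := by
      rw [Nat.card_eq_fintype_card, Fintype.card_coe, hcard]
    rw [card_fin_lt] at e1
    omega
  exact ⟨σ, hlin, by omega⟩

/-- Trivial extremals: `N_i = 0` iff there are more than `i − 1` elements below `x`
or more than `n − i` elements above `x`. -/
theorem stmt11 {α : Type*} [Fintype α] [PartialOrder α] (x : α)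
    (i : ℕ) (h1 : 1 ≤ i) (h2 : i ≤ Fintype.card α) :
    NExt α x i = 0 ↔
      i - 1 < Nat.card {y : α | y < x} ∨
      Fintype.card α - i < Nat.card {y : α | x < y} := by
  classical
  have hBc : Nat.card {y : α | y < x} = (Finset.univ.filter (· < x)).card := by
    rw [Nat.card_coe_set_eq, Set.ncard_eq_toFinset_card', Set.toFinset_setOf]
  have hAc : Nat.card {y : α | x < y} = (Finset.univ.filter (x < ·)).card := by
    rw [Nat.card_coe_set_eq, Set.ncard_eq_toFinset_card', Set.toFinset_setOf]
  have hfin : Finite {σ : α ≃ Fin (Fintype.card α) // IsLinExt σ ∧ (σ x : ℕ) + 1 = i} := by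
    have : Finite (α ≃ Fin (Fintype.card α)) :=
      Finite.of_injective (fun σ => (σ : α → Fin (Fintype.card α)))
        (fun a b h => Equiv.coe_fn_injective h)
    exact Subtype.finite
  have bound : ∀ σ : α ≃ Fin (Fintype.card α), IsLinExt σ →
      Nat.card {y : α | y < x} ≤ (σ x : ℕ) ∧
      Nat.card {y : α | x < y} ≤ Fintype.card α - 1 - (σ x : ℕ) := by
    intro σ hσ
    constructor
    · rw [← card_fin_lt (σ x)]
      exact Nat.card_le_card_of_injective
        (fun y => (⟨σ y.1, hσ y.1 x y.2⟩ : {j : Fin (Fintype.card α) // j < σ x}))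
        (fun a b h => Subtype.ext (σ.injective (congrArg Subtype.val h)))
    · rw [← card_fin_gt (σ x)]
      exact Nat.card_le_card_of_injective
        (fun y => (⟨σ y.1, hσ x y.1 y.2⟩ : {j : Fin (Fintype.card α) // σ x < j}))
        (fun a b h => Subtype.ext (σ.injective (congrArg Subtype.val h)))
  rw [NExt, Nat.card_eq_zero]
  constructor
  · rintro (he | hinf)
    · by_contra hc
      push_neg at hc
      obtain ⟨σ, hσ, hi⟩ := exists_linext x i h1 h2 (by rw [← hBc]; omega) (by rw [← hAc]; omega)
      exact he.false ⟨σ, hσ, hi⟩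
    · exact absurd hinf hfin.not_infinite
  · intro h
    left
    refine ⟨?_⟩
    rintro ⟨σ, hσ, hi⟩
    obtain ⟨b1, b2⟩ := bound σ hσ
    rcases h with h | h
    · omega
    · omega
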